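/- Let ε > 0 and let C, D be symmetric positive definite n×n matrices. Then (4/ε)·D^{1/2}·(I + (I + (16/ε²)·D^{1/2} C D^{1/2})^{1/2})^{−1}·D^{1/2} = I − (ε/4)·C^{−1/2}·(I + (4/ε)·C − (I + (16/ε²)·C^{1/2} D C^{1/2})^{1/2})·C^{−1/2}. -/

import Mathlib

open Matrix
open scoped Classical

noncomputable section

/-- The unique symmetric positive semidefinite square root of a positive
semidefinite matrix (junk value `0` otherwise). -/
def sqrtm {n : ℕ} (A : Matrix (Fin n) (Fin n) ℝ) : Matrix (Fin n) (Fin n) ℝ :=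
  if h : A.PosSemidef then
    (h.1.eigenvectorUnitary : Matrix (Fin n) (Fin n) ℝ) *
      diagonal ((↑) ∘ (√·) ∘ h.1.eigenvalues) *
      (star h.1.eigenvectorUnitary : Matrix (Fin n) (Fin n) ℝ)
  else 0

end

open scoped MatrixOrder

namespace Matrix.PosSemidef

noncomputable def sqrt {n : ℕ} {A : Matrix (Fin n) (Fin n) ℝ} (_h : A.PosSemidef) :
    Matrix (Fin n) (Fin n) ℝ := CFC.sqrt A

lemma posSemidef_sqrt {n : ℕ} {A : Matrix (Fin n) (Fin n) ℝ} (h : A.PosSemidef) :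
    h.sqrt.PosSemidef := (CFC.sqrt_nonneg A).posSemidef

lemma sqrt_mul_self {n : ℕ} {A : Matrix (Fin n) (Fin n) ℝ} (h : A.PosSemidef) :
    h.sqrt * h.sqrt = A := CFC.sqrt_mul_sqrt_self A h.nonneg

lemma eq_sqrt_of_sq_eq {n : ℕ} {A B : Matrix (Fin n) (Fin n) ℝ} (hA : A.PosSemidef)
    (hB : B.PosSemidef) (h : A ^ 2 = B) : A = hB.sqrt := by
  unfold sqrt
  rw [← h, CFC.sqrt_sq A hA.nonneg]

end Matrix.PosSemidef

lemma sqrtm_eq_sqrt {n : ℕ} (A : Matrix (Fin n) (Fin n) ℝ) (h : A.PosSemidef) :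
    sqrtm A = h.sqrt := by
  rw [sqrtm, dif_pos h, Matrix.PosSemidef.sqrt, CFC.sqrt_eq_cfc, cfc_nnreal_eq_real _ A,
    h.1.cfc_eq, IsHermitian.cfc, Unitary.conjStarAlgAut_apply]
  congr 2
  congr 1
  funext i
  simp [Real.coe_sqrt, Real.coe_toNNReal', max_eq_left (h.eigenvalues_nonneg i)]

lemma sqrt_shift {n : ℕ} (M : Matrix (Fin n) (Fin n) ℝ) :
    sqrtm (1 + M * Mᴴ) = 1 + M * (1 + sqrtm (1 + Mᴴ * M))⁻¹ * Mᴴ := by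
  have hA : (1 + Mᴴ * M).PosSemidef :=
    PosSemidef.add .one (posSemidef_conjTranspose_mul_self M)
  have hB : (1 + M * Mᴴ).PosSemidef :=
    PosSemidef.add .one (posSemidef_self_mul_conjTranspose M)
  have hsA : sqrtm (1 + Mᴴ * M) = hA.sqrt := sqrtm_eq_sqrt _ hA
  have hsB : sqrtm (1 + M * Mᴴ) = hB.sqrt := sqrtm_eq_sqrt _ hB
  rw [hsA, hsB]
  set S := hA.sqrt with hSdef
  have hS : S.PosSemidef := hA.posSemidef_sqrt
  have hSS : S * S = 1 + Mᴴ * M := hA.sqrt_mul_self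
  have h1S : (1 + S).PosDef := PosDef.add_posSemidef .one hS
  have hu : IsUnit (1 + S).det := h1S.det_pos.ne'.isUnit
  set N := (1 + S)⁻¹ with hNdef
  have hN : N.PosSemidef := h1S.inv.posSemidef
  have hNl : (1 + S) * N = 1 := mul_nonsing_inv _ hu
  have hNr : N * (1 + S) = 1 := nonsing_inv_mul _ hu
  have h5 : Mᴴ * M = (1 + S) * (S - 1) := by
    have : (1 + S) * (S - 1) = S * S - 1 := by noncomm_ring
    rw [this, hSS]; abel
  have h6 : (M * N * Mᴴ) * (M * N * Mᴴ) = M * ((S - 1) * N) * Mᴴ := by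
    calc (M * N * Mᴴ) * (M * N * Mᴴ)
        = M * ((N * (Mᴴ * M)) * N) * Mᴴ := by simp only [mul_assoc]
      _ = M * ((N * ((1 + S) * (S - 1))) * N) * Mᴴ := by rw [h5]
      _ = M * ((S - 1) * N) * Mᴴ := by
            rw [← mul_assoc N, hNr, one_mul]
  have key : N + N + (S - 1) * N = 1 := by
    have : N + N + (S - 1) * N = (1 + S) * N := by noncomm_ring
    rw [this, hNl]
  have hT : (1 + M * N * Mᴴ).PosSemidef :=
    PosSemidef.add .one (hN.mul_mul_conjTranspose_same M)
  have hT2 : (1 + M * N * Mᴴ) ^ 2 = 1 + M * Mᴴ := by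
    have e1 : (1 + M * N * Mᴴ) ^ 2
        = 1 + (M * N * Mᴴ + M * N * Mᴴ + (M * N * Mᴴ) * (M * N * Mᴴ)) := by noncomm_ring
    rw [e1, h6]
    have e2 : M * N * Mᴴ + M * N * Mᴴ + M * ((S - 1) * N) * Mᴴ
        = M * (N + N + (S - 1) * N) * Mᴴ := by noncomm_ring
    rw [e2, key, mul_one]
  exact (hT.eq_sqrt_of_sq_eq hB hT2).symm

theorem stmt_10 {n : ℕ} (ε : ℝ) (hε : 0 < ε)
    (C D : Matrix (Fin n) (Fin n) ℝ) (hC : C.PosDef) (hD : D.PosDef) :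
    (4 / ε) •
        (sqrtm D * (1 + sqrtm (1 + (16 / ε ^ 2) • (sqrtm D * C * sqrtm D)))⁻¹ * sqrtm D) =
      1 - (ε / 4) •
        ((sqrtm C)⁻¹ * (1 + (4 / ε) • C - sqrtm (1 + (16 / ε ^ 2) • (sqrtm C * D * sqrtm C))) *
          (sqrtm C)⁻¹) := by
  have hεne : ε ≠ 0 := hε.ne'
  set c := sqrtm C with hcdef
  set d := sqrtm D with hddef
  have hcs : c = hC.posSemidef.sqrt := sqrtm_eq_sqrt _ hC.posSemidef
  have hds : d = hD.posSemidef.sqrt := sqrtm_eq_sqrt _ hD.posSemidef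
  have hcc : c * c = C := by rw [hcs]; exact hC.posSemidef.sqrt_mul_self
  have hdd : d * d = D := by rw [hds]; exact hD.posSemidef.sqrt_mul_self
  have hch : cᴴ = c := by rw [hcs]; exact hC.posSemidef.posSemidef_sqrt.isHermitian
  have hdh : dᴴ = d := by rw [hds]; exact hD.posSemidef.posSemidef_sqrt.isHermitian
  have hcdet : c.det * c.det = C.det := by rw [← det_mul, hcc]
  have hcdne : c.det ≠ 0 := by
    intro h
    rw [h, mul_zero] at hcdet
    exact hC.det_pos.ne' hcdet.symm
  have hcu : IsUnit c.det := hcdne.isUnit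
  have hcl : c⁻¹ * c = 1 := nonsing_inv_mul _ hcu
  have hcr : c * c⁻¹ = 1 := mul_nonsing_inv _ hcu
  set M : Matrix (Fin n) (Fin n) ℝ := (4 / ε) • (c * d) with hMdef
  have hMH : Mᴴ = (4 / ε) • (d * c) := by
    rw [hMdef, conjTranspose_smul, conjTranspose_mul, hch, hdh, star_trivial]
  have hMMH : M * Mᴴ = (16 / ε ^ 2) • (c * D * c) := by
    rw [hMdef, hMH, smul_mul_smul_comm]
    congr 1
    · ring
    · rw [← hdd]; noncomm_ring
  have hMHM : Mᴴ * M = (16 / ε ^ 2) • (d * C * d) := by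
    rw [hMdef, hMH, smul_mul_smul_comm]
    congr 1
    · ring
    · rw [← hcc]; noncomm_ring
  have hshift := sqrt_shift M
  rw [hMMH, hMHM] at hshift
  rw [hshift]
  set N : Matrix (Fin n) (Fin n) ℝ := (1 + sqrtm (1 + (16 / ε ^ 2) • (d * C * d)))⁻¹ with hNdef
  set E : Matrix (Fin n) (Fin n) ℝ := d * N * d with hEdef
  have hMNM : M * N * Mᴴ = (16 / ε ^ 2) • (c * E * c) := by
    rw [hMdef, hMH, smul_mul_assoc, smul_mul_assoc, mul_smul_comm, smul_smul, hEdef]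
    congr 1
    · ring
    · noncomm_ring
  have hinner : 1 + (4 / ε) • C - (1 + M * N * Mᴴ)
      = (4 / ε) • C - (16 / ε ^ 2) • (c * E * c) := by
    rw [hMNM]; abel
  have hconj : c⁻¹ * ((4 / ε) • C - (16 / ε ^ 2) • (c * E * c)) * c⁻¹
      = (4 / ε) • (1 : Matrix (Fin n) (Fin n) ℝ) - (16 / ε ^ 2) • E := by
    rw [mul_sub, sub_mul, mul_smul_comm, mul_smul_comm, smul_mul_assoc, smul_mul_assoc]
    congr 2
    · rw [← hcc, ← mul_assoc, hcl, one_mul, hcr]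
    · rw [hEdef]
      calc c⁻¹ * (c * (d * N * d) * c) * c⁻¹
          = (c⁻¹ * c) * (d * N * d) * (c * c⁻¹) := by noncomm_ring
        _ = d * N * d := by rw [hcl, hcr, one_mul, mul_one]
  rw [hinner, hconj, smul_sub, smul_smul, smul_smul,
    show (ε / 4) * (4 / ε) = 1 by field_simp,
    show (ε / 4) * (16 / ε ^ 2) = 4 / ε by field_simp; ring, one_smul]
  rw [hEdef]
  abel
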